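/- For every integer N ≥ 3, the Diophantine equation x² + y² + z² − N·x·y·z + (N−3) = 0 has infinitely many integer solution triples; in particular the triples (p_n(N), p_{n+1}(N), p_{n+2}(N)) for n ≥ 0 are pairwise distinct. -/
import Mathlib


theorem infinitely_many_solutions (N : ℤ) (hN : 3 ≤ N) (p : ℕ → ℤ)
    (h0 : p 0 = 1) (h1 : p 1 = 1) (h2 : p 2 = 1)
    (hrec : ∀ n, p (n + 3) = N * p (n + 2) * p (n + 1) - p n) :
    {t : ℤ × ℤ × ℤ | t.1 ^ 2 + t.2.1 ^ 2 + t.2.2 ^ 2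
        - N * t.1 * t.2.1 * t.2.2 + (N - 3) = 0}.Infinite ∧
    Function.Injective (fun n : ℕ => (p n, p (n + 1), p (n + 2))) := by
  -- each triple is a solution
  have hsol : ∀ n, p n ^ 2 + p (n+1) ^ 2 + p (n+2) ^ 2
      - N * p n * p (n+1) * p (n+2) + (N - 3) = 0 := by
    intro n
    induction n with
    | zero => rw [h0, h1, h2]; ring
    | succ k ih =>
        have h := hrec k
        have : p (k+3) = N * p (k+2) * p (k+1) - p k := h
        rw [show k + 1 + 2 = k + 3 from rfl, this]
        nlinarith [ih]
  -- positivity and monotonicity invariant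
  have key : ∀ n, 1 ≤ p n ∧ 1 ≤ p (n+1) ∧ 1 ≤ p (n+2)
      ∧ p n ≤ p (n+1) ∧ p (n+1) ≤ p (n+2) := by
    intro n
    induction n with
    | zero => rw [h0, h1, h2]; norm_num
    | succ k ih =>
        obtain ⟨a, b, c, d, e⟩ := ih
        have h := hrec k
        have h2c : p (k+2) + 1 ≤ p (k+3) := by nlinarith [mul_nonneg (mul_nonneg (by linarith : (0:ℤ) ≤ N - 3) (by linarith : (0:ℤ) ≤ p (k+2))) (by linarith : (0:ℤ) ≤ p (k+1)), mul_nonneg (by linarith : (0:ℤ) ≤ p (k+2)) (by linarith : (0:ℤ) ≤ p (k+1) - 1)]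
        refine ⟨b, c, by linarith, e, by linarith⟩
  -- p is strictly increasing from index 2
  have hstrict : ∀ n, p (n+2) < p (n+3) := by
    intro n
    obtain ⟨a, b, c, d, e⟩ := key n
    have h := hrec n
    nlinarith [mul_nonneg (mul_nonneg (by linarith : (0:ℤ) ≤ N - 3) (by linarith : (0:ℤ) ≤ p (n+2))) (by linarith : (0:ℤ) ≤ p (n+1)), mul_nonneg (by linarith : (0:ℤ) ≤ p (n+2)) (by linarith : (0:ℤ) ≤ p (n+1) - 1)]
  have hmono : StrictMono (fun n => p (n+2)) :=
    strictMono_nat_of_lt_succ hstrict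
  have hinj : Function.Injective (fun n : ℕ => (p n, p (n + 1), p (n + 2))) := by
    intro m n h
    simp only [Prod.mk.injEq] at h
    exact hmono.injective h.2.2
  refine ⟨?_, hinj⟩
  exact Set.infinite_of_injective_forall_mem (f := fun n : ℕ => (p n, p (n+1), p (n+2)))
    hinj (fun n => hsol n)
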